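/- Let $1 < p < q < r$, $a_1, a_3 \in \{-1,1\}$, $\omega > 0$, $\gamma \in \mathbb{R}$, and define $U(s) = \omega s - \frac{2a_1}{p+1}s^{\frac{p+1}{2}} + \frac{2\gamma}{q+1}s^{\frac{q+1}{2}} - \frac{2a_3}{r+1}s^{\frac{r+1}{2}}$ for $s \ge 0$. Suppose $b > 0$ satisfies $U(b) = U'(b) = 0$ and $U''(b) \ge 0$. Then $U(s) > 0$ for all $s \in (0, b)$, i.e.~$b$ is the smallest positive zero of $U$. -/

import Mathlib

open Set Real Filter

private lemma rpow_split {s : ℝ} (hs : 0 < s) {a b c : ℝ} (h : a = b + c) :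
    s ^ a = s ^ b * s ^ c := by rw [h, Real.rpow_add hs]

private lemma hasDerivAt_pow3 (C k1 k2 k3 e1 e2 e3 : ℝ) {s : ℝ} (hs : 0 < s) :
    HasDerivAt (fun x : ℝ => C + k1 * x ^ e1 + k2 * x ^ e2 + k3 * x ^ e3)
      (k1 * (e1 * s ^ (e1 - 1)) + k2 * (e2 * s ^ (e2 - 1)) + k3 * (e3 * s ^ (e3 - 1))) s := by
  have h1 := (Real.hasDerivAt_rpow_const (x := s) (p := e1) (Or.inl hs.ne')).const_mul k1
  have h2 := (Real.hasDerivAt_rpow_const (x := s) (p := e2) (Or.inl hs.ne')).const_mul k2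
  have h3 := (Real.hasDerivAt_rpow_const (x := s) (p := e3) (Or.inl hs.ne')).const_mul k3
  exact ((((hasDerivAt_const s C).add h1).add h2).add h3).congr_deriv (by ring)

private lemma hasDerivAt_pow2 (C k2 k3 e2 e3 : ℝ) {s : ℝ} (hs : 0 < s) :
    HasDerivAt (fun x : ℝ => C + k2 * x ^ e2 + k3 * x ^ e3)
      (k2 * (e2 * s ^ (e2 - 1)) + k3 * (e3 * s ^ (e3 - 1))) s := by
  have h2 := (Real.hasDerivAt_rpow_const (x := s) (p := e2) (Or.inl hs.ne')).const_mul k2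
  have h3 := (Real.hasDerivAt_rpow_const (x := s) (p := e3) (Or.inl hs.ne')).const_mul k3
  exact (((hasDerivAt_const s C).add h2).add h3).congr_deriv (by ring)

private lemma mono_key {F DF : ℝ → ℝ} (hd : ∀ s : ℝ, 0 < s → HasDerivAt F (DF s) s)
    {u v : ℝ} (hu : 0 < u) (huv : u < v) (hpos : ∀ t ∈ Ioo u v, 0 < DF t) :
    F u < F v := by
  have hmono : StrictMonoOn F (Icc u v) := by
    apply strictMonoOn_of_deriv_pos (convex_Icc u v)
    · intro t ht
      exact (hd t (lt_of_lt_of_le hu ht.1)).continuousAt.continuousWithinAt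
    · intro t ht
      rw [interior_Icc] at ht
      rw [(hd t (hu.trans ht.1)).deriv]
      exact hpos t ht
  exact hmono (left_mem_Icc.2 huv.le) (right_mem_Icc.2 huv.le) huv

private lemma anti_key {F DF : ℝ → ℝ} (hd : ∀ s : ℝ, 0 < s → HasDerivAt F (DF s) s)
    {u v : ℝ} (hu : 0 < u) (huv : u < v) (hneg : ∀ t ∈ Ioo u v, DF t < 0) :
    F v < F u := by
  have h := mono_key (F := fun s => -F s) (DF := fun s => -DF s)
    (fun s hs => (hd s hs).neg) hu huv (fun t ht => neg_pos.2 (hneg t ht))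
  simpa using h

theorem smallest_positive_zero_of_U
    (p q r a₁ a₃ ω γ b : ℝ)
    (hp : 1 < p) (hpq : p < q) (hqr : q < r)
    (ha₁ : a₁ = -1 ∨ a₁ = 1) (ha₃ : a₃ = -1 ∨ a₃ = 1)
    (hω : 0 < ω) (hb : 0 < b)
    (U : ℝ → ℝ)
    (hU : ∀ s : ℝ, U s = ω * s - 2 * a₁ / (p + 1) * s ^ ((p + 1)/2)
        + 2 * γ / (q + 1) * s ^ ((q + 1)/2) - 2 * a₃ / (r + 1) * s ^ ((r + 1)/2))
    (hUb : U b = 0) (hU'b : deriv U b = 0) (hU''b : 0 ≤ deriv (deriv U) b) :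
    ∀ s ∈ Ioo (0:ℝ) b, 0 < U s := by
  have hp1 : (0:ℝ) < p + 1 := by linarith
  have hq1 : (0:ℝ) < q + 1 := by linarith
  have hr1 : (0:ℝ) < r + 1 := by linarith
  obtain ⟨B1, hB1def⟩ : ∃ x : ℝ, x = (p - 1)/2 := ⟨_, rfl⟩
  obtain ⟨B2, hB2def⟩ : ∃ x : ℝ, x = (q - 1)/2 := ⟨_, rfl⟩
  obtain ⟨B3, hB3def⟩ : ∃ x : ℝ, x = (r - 1)/2 := ⟨_, rfl⟩
  have hB1 : 0 < B1 := by rw [hB1def]; linarith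
  have hB12 : B1 < B2 := by rw [hB1def, hB2def]; linarith
  have hB23 : B2 < B3 := by rw [hB2def, hB3def]; linarith
  have hB3 : 0 < B3 := by linarith
  obtain ⟨c1, hc1def⟩ : ∃ x : ℝ, x = -(2 * a₁ / (p + 1)) := ⟨_, rfl⟩
  obtain ⟨c2, hc2def⟩ : ∃ x : ℝ, x = 2 * γ / (q + 1) := ⟨_, rfl⟩
  obtain ⟨c3, hc3def⟩ : ∃ x : ℝ, x = -(2 * a₃ / (r + 1)) := ⟨_, rfl⟩
  obtain ⟨K, hKdef⟩ : ∃ x : ℝ, x = c3 * B3 * (B3 - B1) := ⟨_, rfl⟩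
  obtain ⟨V, hVdef⟩ : ∃ F : ℝ → ℝ,
    F = fun s => ω + c1 * s ^ B1 + c2 * s ^ B2 + c3 * s ^ B3 := ⟨_, rfl⟩
  obtain ⟨G, hGdef⟩ : ∃ F : ℝ → ℝ,
    F = fun s => c1 * B1 + c2 * B2 * s ^ (B2 - B1) + c3 * B3 * s ^ (B3 - B1) := ⟨_, rfl⟩
  obtain ⟨H, hHdef⟩ : ∃ F : ℝ → ℝ,
    F = fun s => c2 * B2 * (B2 - B1) + K * s ^ (B3 - B2) := ⟨_, rfl⟩
  -- U s = s * V s for s > 0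
  have hUV : ∀ s : ℝ, 0 < s → U s = s * V s := by
    intro s hs
    have e1 : s ^ ((p + 1)/2) = s ^ (1:ℝ) * s ^ B1 := rpow_split hs (by rw [hB1def]; ring)
    have e2 : s ^ ((q + 1)/2) = s ^ (1:ℝ) * s ^ B2 := rpow_split hs (by rw [hB2def]; ring)
    have e3 : s ^ ((r + 1)/2) = s ^ (1:ℝ) * s ^ B3 := rpow_split hs (by rw [hB3def]; ring)
    rw [hU s, e1, e2, e3, Real.rpow_one, hVdef]
    simp only
    rw [hc1def, hc2def, hc3def]
    ring
  -- derivative of V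
  have hVd : ∀ s : ℝ, 0 < s → HasDerivAt V (s ^ (B1 - 1) * G s) s := by
    intro s hs
    have h := hasDerivAt_pow3 ω c1 c2 c3 B1 B2 B3 hs
    have key : c1 * (B1 * s ^ (B1 - 1)) + c2 * (B2 * s ^ (B2 - 1)) + c3 * (B3 * s ^ (B3 - 1))
        = s ^ (B1 - 1) * G s := by
      rw [rpow_split hs (show B2 - 1 = (B1 - 1) + (B2 - B1) by ring),
        rpow_split hs (show B3 - 1 = (B1 - 1) + (B3 - B1) by ring), hGdef]
      simp only
      ring
    rw [key] at h
    rw [hVdef]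
    exact h
  -- derivative of G
  have hGd : ∀ s : ℝ, 0 < s → HasDerivAt G (s ^ (B2 - B1 - 1) * H s) s := by
    intro s hs
    have h := hasDerivAt_pow2 (c1 * B1) (c2 * B2) (c3 * B3) (B2 - B1) (B3 - B1) hs
    have key : c2 * B2 * ((B2 - B1) * s ^ (B2 - B1 - 1))
          + c3 * B3 * ((B3 - B1) * s ^ (B3 - B1 - 1))
        = s ^ (B2 - B1 - 1) * H s := by
      rw [rpow_split hs (show B3 - B1 - 1 = (B2 - B1 - 1) + (B3 - B2) by ring), hHdef]
      simp only
      rw [hKdef]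
      ring
    rw [key] at h
    rw [hGdef]
    exact h
  -- V b = 0
  have hVb : V b = 0 := by
    have h0 : b * V b = 0 := by rw [← hUV b hb, hUb]
    exact (mul_eq_zero.mp h0).resolve_left hb.ne'
  -- G b = 0
  have hUV_ev : U =ᶠ[nhds b] fun s => s * V s :=
    Filter.eventuallyEq_of_mem (isOpen_Ioi.mem_nhds hb) (fun s hs => hUV s hs)
  have hUdb : HasDerivAt U (V b + b * (b ^ (B1 - 1) * G b)) b := by
    have h := ((hasDerivAt_id b).mul (hVd b hb)).congr_of_eventuallyEq hUV_ev
    simpa using h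
  have hpb1 : 0 < b ^ (B1 - 1) := Real.rpow_pos_of_pos hb _
  have hGb : G b = 0 := by
    have h1 : V b + b * (b ^ (B1 - 1) * G b) = 0 := by rw [← hUdb.deriv]; exact hU'b
    rw [hVb, zero_add] at h1
    have h2 : b ^ (B1 - 1) * G b = 0 := (mul_eq_zero.mp h1).resolve_left hb.ne'
    exact (mul_eq_zero.mp h2).resolve_left hpb1.ne'
  -- deriv U on (0,∞)
  have hDerivU : ∀ s : ℝ, 0 < s → deriv U s = V s + s ^ B1 * G s := by
    intro s hs
    have hev : U =ᶠ[nhds s] fun t => t * V t :=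
      Filter.eventuallyEq_of_mem (isOpen_Ioi.mem_nhds hs) (fun t ht => hUV t ht)
    have h := ((hasDerivAt_id s).mul (hVd s hs)).congr_of_eventuallyEq hev
    rw [h.deriv]
    have e : s * s ^ (B1 - 1) = s ^ B1 := by
      rw [rpow_split hs (show B1 = 1 + (B1 - 1) by ring), Real.rpow_one]
    simp only [id_eq, one_mul, ← mul_assoc, e]
  -- 0 ≤ H b
  have hHb : 0 ≤ H b := by
    have hev2 : deriv U =ᶠ[nhds b] fun s => V s + s ^ B1 * G s :=
      Filter.eventuallyEq_of_mem (isOpen_Ioi.mem_nhds hb) (fun s hs => hDerivU s hs)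
    have hDd : HasDerivAt (fun s : ℝ => V s + s ^ B1 * G s)
        (b ^ (B1 - 1) * G b + (B1 * b ^ (B1 - 1) * G b + b ^ B1 * (b ^ (B2 - B1 - 1) * H b)))
        b :=
      (hVd b hb).add
        ((Real.hasDerivAt_rpow_const (x := b) (p := B1) (Or.inl hb.ne')).mul (hGd b hb))
    have h3 : deriv (deriv U) b
        = b ^ (B1 - 1) * G b + (B1 * b ^ (B1 - 1) * G b + b ^ B1 * (b ^ (B2 - B1 - 1) * H b)) :=
      by rw [hev2.deriv_eq, hDd.deriv]
    rw [h3, hGb] at hU''b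
    have p1 : 0 < b ^ B1 := Real.rpow_pos_of_pos hb _
    have p2 : 0 < b ^ (B2 - B1 - 1) := Real.rpow_pos_of_pos hb _
    by_contra hneg
    push_neg at hneg
    have h4 := mul_neg_of_pos_of_neg p1 (mul_neg_of_pos_of_neg p2 hneg)
    simp only [mul_zero] at hU''b
    linarith
  -- monotonicity helpers
  have hVlt : ∀ u v : ℝ, 0 < u → u < v → (∀ t ∈ Ioo u v, G t < 0) → V v < V u := by
    intro u v hu huv hGneg
    exact anti_key hVd hu huv (fun t ht =>
      mul_neg_of_pos_of_neg (Real.rpow_pos_of_pos (hu.trans ht.1) _) (hGneg t ht))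
  have hVgt : ∀ u v : ℝ, 0 < u → u < v → (∀ t ∈ Ioo u v, 0 < G t) → V u < V v := by
    intro u v hu huv hGpos
    exact mono_key hVd hu huv (fun t ht =>
      mul_pos (Real.rpow_pos_of_pos (hu.trans ht.1) _) (hGpos t ht))
  have hGlt : ∀ u v : ℝ, 0 < u → u < v → (∀ t ∈ Ioo u v, 0 < H t) → G u < G v := by
    intro u v hu huv hHpos
    exact mono_key hGd hu huv (fun t ht =>
      mul_pos (Real.rpow_pos_of_pos (hu.trans ht.1) _) (hHpos t ht))
  have hGgt : ∀ u v : ℝ, 0 < u → u < v → (∀ t ∈ Ioo u v, H t < 0) → G v < G u := by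
    intro u v hu huv hHneg
    exact anti_key hGd hu huv (fun t ht =>
      mul_neg_of_pos_of_neg (Real.rpow_pos_of_pos (hu.trans ht.1) _) (hHneg t ht))
  -- H comparison
  have hHcomp : ∀ x y : ℝ, H y - H x = K * (y ^ (B3 - B2) - x ^ (B3 - B2)) := by
    intro x y; rw [hHdef]; simp only; ring
  have hrp : ∀ x y : ℝ, 0 ≤ x → x < y → x ^ (B3 - B2) < y ^ (B3 - B2) :=
    fun x y hx hxy => Real.rpow_lt_rpow hx hxy (by linarith)
  rcases ha₃ with h3 | h3
  · -- a₃ = -1 : c3 > 0, H strictly increasing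
    have hc3 : 0 < c3 := by
      have he : c3 = 2 / (r + 1) := by rw [hc3def, h3]; ring
      rw [he]; exact div_pos (by norm_num) hr1
    have hK : 0 < K := by
      rw [hKdef]; apply mul_pos (mul_pos hc3 hB3); linarith
    have hHlt : ∀ x y : ℝ, 0 < x → x < y → H x < H y := by
      intro x y hx hxy
      have h5 := hHcomp x y
      have h6 := mul_pos hK (sub_pos.mpr (hrp x y hx.le hxy))
      linarith
    -- limit of V at 0+
    have hVtend : Tendsto V (nhdsWithin 0 (Ioi (0:ℝ))) (nhds ω) := by
      have tt : ∀ B : ℝ, 0 < B →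
          Tendsto (fun s : ℝ => s ^ B) (nhdsWithin 0 (Ioi (0:ℝ))) (nhds 0) := by
        intro B hB
        have h := (Real.continuousAt_rpow_const 0 B (Or.inr hB.le)).tendsto
        rw [Real.zero_rpow hB.ne'] at h
        exact h.mono_left nhdsWithin_le_nhds
      have h : Tendsto (fun s : ℝ => ω + c1 * s ^ B1 + c2 * s ^ B2 + c3 * s ^ B3)
          (nhdsWithin 0 (Ioi (0:ℝ))) (nhds (ω + c1 * 0 + c2 * 0 + c3 * 0)) :=
        ((tendsto_const_nhds.add ((tt B1 hB1).const_mul c1)).add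
          ((tt B2 (by linarith)).const_mul c2)).add ((tt B3 hB3).const_mul c3)
      have he : ω + c1 * 0 + c2 * 0 + c3 * 0 = ω := by ring
      rw [he] at h
      rw [hVdef]
      exact h
    intro s0 hs0
    by_contra hcon
    push_neg at hcon
    have hVs0 : V s0 ≤ 0 := by
      have h4 := hUV s0 hs0.1
      rw [h4] at hcon
      nlinarith [hs0.1]
    rcases lt_or_ge (G s0) 0 with hGs0 | hGs0
    · have hGneg : ∀ t ∈ Ioo s0 b, G t < 0 := by
        intro t ht
        rcases le_or_gt (H t) 0 with hHt | hHt
        · have h5 : G t < G s0 := hGgt s0 t hs0.1 ht.1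
            (fun u hu => lt_of_lt_of_le (hHlt u t (hs0.1.trans hu.1) hu.2) hHt)
          linarith
        · have h5 : G t < G b := hGlt t b (hs0.1.trans ht.1) ht.2
            (fun u hu => hHt.trans (hHlt t u (hs0.1.trans ht.1) hu.1))
          rw [hGb] at h5
          exact h5
      have h6 : V b < V s0 := hVlt s0 b hs0.1 hs0.2 hGneg
      rw [hVb] at h6
      linarith
    · rcases le_or_gt (H s0) 0 with hHs0 | hHs0
      · have hGpos : ∀ t ∈ Ioo (0:ℝ) s0, 0 < G t := by
          intro t ht
          have h5 : G s0 < G t := hGgt t s0 ht.1 ht.2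
            (fun u hu => lt_of_lt_of_le (hHlt u s0 (ht.1.trans hu.1) hu.2) hHs0)
          linarith
        have hmono : ∀ t ∈ Ioo (0:ℝ) s0, V t < V s0 := fun t ht =>
          hVgt t s0 ht.1 ht.2 (fun u hu => hGpos u ⟨ht.1.trans hu.1, hu.2⟩)
        have h7 : ω ≤ V s0 := by
          apply le_of_tendsto hVtend
          filter_upwards [Ioo_mem_nhdsGT_of_mem (left_mem_Ico.mpr hs0.1)] with t ht
          exact (hmono t ht).le
        linarith
      · have h5 : G s0 < G b := hGlt s0 b hs0.1 hs0.2
          (fun u hu => hHs0.trans (hHlt s0 u hs0.1 hu.1))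
        rw [hGb] at h5
        linarith
  · -- a₃ = 1 : c3 < 0, H strictly decreasing
    have hc3 : c3 < 0 := by
      have he : c3 = -(2 / (r + 1)) := by rw [hc3def, h3]; ring
      have : (0:ℝ) < 2 / (r + 1) := div_pos (by norm_num) hr1
      rw [he]; linarith
    have hK : K < 0 := by
      rw [hKdef]; apply mul_neg_of_neg_of_pos (mul_neg_of_neg_of_pos hc3 hB3); linarith
    have hHgt : ∀ x y : ℝ, 0 < x → x < y → H y < H x := by
      intro x y hx hxy
      have h5 := hHcomp x y
      have h6 := mul_neg_of_neg_of_pos hK (sub_pos.mpr (hrp x y hx.le hxy))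
      linarith
    intro s0 hs0
    have hGneg : ∀ t ∈ Ioo s0 b, G t < 0 := by
      intro t ht
      have h5 : G t < G b := hGlt t b (hs0.1.trans ht.1) ht.2 (fun u hu => by
        have h6 : H b < H u := hHgt u b (hs0.1.trans (ht.1.trans hu.1)) hu.2
        linarith [hHb])
      rw [hGb] at h5
      exact h5
    have h6 : V b < V s0 := hVlt s0 b hs0.1 hs0.2 hGneg
    rw [hVb] at h6
    rw [hUV s0 hs0.1]
    exact mul_pos hs0.1 h6
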